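/- arXiv:2309.02657 — 4 statements merged into one kernel-verified Lean document; each statement's English description precedes it below -/
import Mathlib

section
/- Let Q be a real symmetric traceless 3×3 matrix. Then the Frobenius norm of Q² - (1/3)tr(Q²)·I equals (1/√6)·|Q|_F², where |Q|_F denotes the Frobenius norm. -/
open Matrix

noncomputable def frob3 (M : Matrix (Fin 3) (Fin 3) ℝ) : ℝ :=
  Real.sqrt ((Mᵀ * M).trace)

theorem frobenius_deviatoric_identity
    (Q : Matrix (Fin 3) (Fin 3) ℝ) (hsym : Q.IsSymm) (htr : Q.trace = 0) :
    frob3 (Q * Q - (((1 : ℝ) / 3) * (Q * Q).trace) • (1 : Matrix (Fin 3) (Fin 3) ℝ)) =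
      (1 / Real.sqrt 6) * (frob3 Q) ^ 2 := by
  have h10 : Q 1 0 = Q 0 1 := hsym.apply 0 1
  have h20 : Q 2 0 = Q 0 2 := hsym.apply 0 2
  have h21 : Q 2 1 = Q 1 2 := hsym.apply 1 2
  have h22 : Q 2 2 = -(Q 0 0 + Q 1 1) := by
    have : Q 0 0 + Q 1 1 + Q 2 2 = 0 := by
      simpa [Matrix.trace, Fin.sum_univ_three, Matrix.diag] using htr
    linarith
  have htpos : (Qᵀ * Q).trace =
      Q 0 0 ^ 2 + Q 1 1 ^ 2 + (Q 0 0 + Q 1 1) ^ 2 +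
        2 * Q 0 1 ^ 2 + 2 * Q 0 2 ^ 2 + 2 * Q 1 2 ^ 2 := by
    simp [Matrix.trace, Matrix.mul_apply, Fin.sum_univ_three, Matrix.diag,
      Matrix.transpose_apply, h10, h20, h21, h22]
    ring
  have ht0 : (0:ℝ) ≤ (Qᵀ * Q).trace := by rw [htpos]; positivity
  have htQQ : (Q * Q).trace = (Qᵀ * Q).trace := by
    rw [hsym]
  have key : ((Q * Q - (((1 : ℝ) / 3) * (Q * Q).trace) • (1 : Matrix (Fin 3) (Fin 3) ℝ))ᵀ *
      (Q * Q - (((1 : ℝ) / 3) * (Q * Q).trace) • (1 : Matrix (Fin 3) (Fin 3) ℝ))).trace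
      = (1/6) * ((Qᵀ * Q).trace) ^ 2 := by
    rw [htpos]
    simp [Matrix.trace, Matrix.mul_apply, Fin.sum_univ_three, Matrix.diag,
      Matrix.sub_apply, Matrix.smul_apply, Matrix.one_apply, Matrix.transpose_apply,
      h10, h20, h21, h22]
    ring
  rw [frob3, frob3, key]
  set t : ℝ := (Qᵀ * Q).trace with hT
  rw [show (1:ℝ)/6 * t ^ 2 = (t/Real.sqrt 6)^2 by
    rw [div_pow, Real.sq_sqrt (by norm_num)]; ring]
  rw [Real.sqrt_sq (by positivity), Real.sq_sqrt ht0]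
  ring
end

section
/- Let Q be a real symmetric traceless 3×3 matrix. Then |tr(Q³)| ≤ |Q|_F³ / √6. -/
open Matrix

lemma my_trace_conj {n : Type*} [Fintype n] [DecidableEq n]
    (U : Matrix.unitaryGroup n ℝ) (M : Matrix n n ℝ) :
    ((U : Matrix n n ℝ) * M * star (U : Matrix n n ℝ)).trace = M.trace := by
  rw [Matrix.trace_mul_comm, ← mul_assoc,
    (Matrix.mem_unitaryGroup_iff'.mp U.2 : star (U : Matrix n n ℝ) * U = 1), one_mul]

lemma cube_ineq (a b : ℝ) :
    (a ^ 3 + b ^ 3 + (-a - b) ^ 3) ^ 2 * 6 ≤ (a ^ 2 + b ^ 2 + (-a - b) ^ 2) ^ 3 := by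
  nlinarith [sq_nonneg ((a - b) * (2 * a + b) * (a + 2 * b))]

theorem trace_cube_bound
    (Q : Matrix (Fin 3) (Fin 3) ℝ) (hsym : Q.IsSymm) (htr : Q.trace = 0) :
    |(Q * Q * Q).trace| ≤ (frob3 Q) ^ 3 / Real.sqrt 6 := by
  have hH : Q.IsHermitian := by
    rwa [Matrix.IsHermitian, Matrix.conjTranspose_eq_transpose_of_trivial]
  set μ := hH.eigenvalues with hμ
  set U := hH.eigenvectorUnitary with hU
  have hdiag : Q = (U : Matrix (Fin 3) (Fin 3) ℝ) * Matrix.diagonal μ *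
      star (U : Matrix (Fin 3) (Fin 3) ℝ) := by
    have := hH.spectral_theorem
    simpa using this
  have hstar : star (U : Matrix (Fin 3) (Fin 3) ℝ) * U = 1 :=
    Matrix.mem_unitaryGroup_iff'.mp U.2
  have hQ2 : Q * Q = (U : Matrix (Fin 3) (Fin 3) ℝ) * (Matrix.diagonal μ * Matrix.diagonal μ) *
      star (U : Matrix (Fin 3) (Fin 3) ℝ) := by
    rw [hdiag]; rw [show ∀ A B C : Matrix (Fin 3) (Fin 3) ℝ, (A * B * C) * (A * B * C)
      = A * (B * (C * A) * B) * C from fun A B C => by noncomm_ring, hstar]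
    noncomm_ring
  have hQ3 : Q * Q * Q = (U : Matrix (Fin 3) (Fin 3) ℝ) *
      (Matrix.diagonal μ * Matrix.diagonal μ * Matrix.diagonal μ) *
      star (U : Matrix (Fin 3) (Fin 3) ℝ) := by
    rw [hQ2]
    conv_lhs => rw [hdiag]
    rw [show ∀ A B2 B C : Matrix (Fin 3) (Fin 3) ℝ, (A * B2 * C) * (A * B * C)
      = A * (B2 * (C * A) * B) * C from fun A B2 B C => by noncomm_ring, hstar]
    noncomm_ring
  have htrQ : ∑ i, μ i = 0 := by
    have := congrArg Matrix.trace hdiag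
    rw [my_trace_conj, Matrix.trace_diagonal] at this
    rw [← this, htr]
  have htr2 : (Qᵀ * Q).trace = ∑ i, μ i ^ 2 := by
    rw [hsym.eq]
    have := congrArg Matrix.trace hQ2
    rw [my_trace_conj] at this
    rw [this, Matrix.diagonal_mul_diagonal, Matrix.trace_diagonal]
    simp [sq]
  have htr3 : (Q * Q * Q).trace = ∑ i, μ i ^ 3 := by
    have := congrArg Matrix.trace hQ3
    rw [my_trace_conj] at this
    rw [this, Matrix.diagonal_mul_diagonal, Matrix.diagonal_mul_diagonal,
      Matrix.trace_diagonal]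
    simp [pow_succ, mul_assoc]
  have hsum : μ 0 + μ 1 + μ 2 = 0 := by simpa [Fin.sum_univ_three] using htrQ
  have hc : μ 2 = -μ 0 - μ 1 := by linarith
  have hp : (Qᵀ * Q).trace = μ 0 ^ 2 + μ 1 ^ 2 + μ 2 ^ 2 := by
    rw [htr2, Fin.sum_univ_three]
  have hc3 : (Q * Q * Q).trace = μ 0 ^ 3 + μ 1 ^ 3 + μ 2 ^ 3 := by
    rw [htr3, Fin.sum_univ_three]
  have key : (μ 0 ^ 3 + μ 1 ^ 3 + μ 2 ^ 3) ^ 2 * 6 ≤ (μ 0 ^ 2 + μ 1 ^ 2 + μ 2 ^ 2) ^ 3 := by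
    rw [hc]; exact cube_ineq (μ 0) (μ 1)
  have hpnn : (0:ℝ) ≤ μ 0 ^ 2 + μ 1 ^ 2 + μ 2 ^ 2 := by positivity
  have hfrob : frob3 Q = Real.sqrt (μ 0 ^ 2 + μ 1 ^ 2 + μ 2 ^ 2) := by rw [frob3, hp]
  have h6 : (0:ℝ) < Real.sqrt 6 := Real.sqrt_pos.mpr (by norm_num)
  rw [hc3, hfrob, le_div_iff₀ h6,
    show |μ 0 ^ 3 + μ 1 ^ 3 + μ 2 ^ 3| = Real.sqrt ((μ 0 ^ 3 + μ 1 ^ 3 + μ 2 ^ 3) ^ 2) from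
      (Real.sqrt_sq_eq_abs _).symm,
    show Real.sqrt ((μ 0 ^ 3 + μ 1 ^ 3 + μ 2 ^ 3) ^ 2) * Real.sqrt 6
      = Real.sqrt ((μ 0 ^ 3 + μ 1 ^ 3 + μ 2 ^ 3) ^ 2 * 6) from
      (Real.sqrt_mul (by positivity) _).symm,
    show Real.sqrt (μ 0 ^ 2 + μ 1 ^ 2 + μ 2 ^ 2) ^ 3
      = Real.sqrt ((μ 0 ^ 2 + μ 1 ^ 2 + μ 2 ^ 2) ^ 3) from by
        rw [pow_succ, pow_two, Real.mul_self_sqrt hpnn,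
          show (μ 0 ^ 2 + μ 1 ^ 2 + μ 2 ^ 2) ^ 3
            = (μ 0 ^ 2 + μ 1 ^ 2 + μ 2 ^ 2) ^ 2 * (μ 0 ^ 2 + μ 1 ^ 2 + μ 2 ^ 2) by ring,
          Real.sqrt_mul (by positivity), Real.sqrt_sq hpnn]]
  exact Real.sqrt_le_sqrt key
end

section
/- Let B be a real N×N matrix with b_{kk} ≤ 0 and b_{kk} + Σ_{l≠k} |b_{kl}| ≤ 0 for all k, and let A = αI - B with α > 0. Then A is invertible and the operator norm of A⁻¹ with respect to the maximum (ℓ^∞) vector norm satisfies ‖A⁻¹‖_∞ ≤ 1/α. -/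
open Matrix

lemma key_bound {N : ℕ} (B : Matrix (Fin N) (Fin N) ℝ)
    (hdiag : ∀ k, B k k ≤ 0)
    (hdom : ∀ k, B k k + ∑ l ∈ Finset.univ.erase k, |B k l| ≤ 0)
    (α : ℝ) (hα : 0 < α) (A : Matrix (Fin N) (Fin N) ℝ)
    (hA : A = α • (1 : Matrix (Fin N) (Fin N) ℝ) - B)
    (x : Fin N → ℝ) (k : Fin N) (hk : ∀ l, |x l| ≤ |x k|) :
    α * |x k| ≤ |(A *ᵥ x) k| := by
  have hAx : (A *ᵥ x) k
      = (α - B k k) * x k - ∑ l ∈ Finset.univ.erase k, B k l * x l := by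
    subst hA
    rw [sub_mulVec, smul_mulVec, one_mulVec]
    simp only [Pi.sub_apply, Pi.smul_apply, smul_eq_mul, mulVec, dotProduct]
    rw [← Finset.add_sum_erase _ (fun l => B k l * x l) (Finset.mem_univ k)]
    ring
  rw [hAx]
  have h1 : |∑ l ∈ Finset.univ.erase k, B k l * x l|
      ≤ (∑ l ∈ Finset.univ.erase k, |B k l|) * |x k| := by
    calc |∑ l ∈ Finset.univ.erase k, B k l * x l|
        ≤ ∑ l ∈ Finset.univ.erase k, |B k l * x l| := Finset.abs_sum_le_sum_abs _ _
      _ ≤ ∑ l ∈ Finset.univ.erase k, |B k l| * |x k| := by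
          apply Finset.sum_le_sum
          intro l _
          rw [abs_mul]
          exact mul_le_mul_of_nonneg_left (hk l) (abs_nonneg _)
      _ = _ := by rw [← Finset.sum_mul]
  have h2 : |(α - B k k) * x k| = (α - B k k) * |x k| := by
    rw [abs_mul, abs_of_pos (by linarith [hdiag k])]
  have h3 := abs_sub_abs_le_abs_sub ((α - B k k) * x k)
    (∑ l ∈ Finset.univ.erase k, B k l * x l)
  have hS := hdom k
  have hxk := abs_nonneg (x k)
  nlinarith [abs_nonneg (∑ l ∈ Finset.univ.erase k, B k l * x l)]

theorem inverse_inf_norm_bound {N : ℕ} (B : Matrix (Fin N) (Fin N) ℝ)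
    (hdiag : ∀ k, B k k ≤ 0)
    (hdom : ∀ k, B k k + ∑ l ∈ Finset.univ.erase k, |B k l| ≤ 0)
    (α : ℝ) (hα : 0 < α) (A : Matrix (Fin N) (Fin N) ℝ)
    (hA : A = α • (1 : Matrix (Fin N) (Fin N) ℝ) - B) :
    IsUnit A ∧ ∀ v : Fin N → ℝ, ∀ k, |(A⁻¹ *ᵥ v) k| ≤ (1 / α) * ⨆ l, |v l| := by
  rcases Nat.eq_zero_or_pos N with hN | hN
  · subst hN
    constructor
    · haveI : Subsingleton (Matrix (Fin 0) (Fin 0) ℝ) :=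
        ⟨fun a b => by ext i; exact i.elim0⟩
      rw [Subsingleton.elim A 1]; exact isUnit_one
    · intro v k; exact k.elim0
  haveI : Nonempty (Fin N) := ⟨⟨0, hN⟩⟩
  have hker : ∀ x : Fin N → ℝ, A *ᵥ x = 0 → x = 0 := by
    intro x hx
    funext k
    obtain ⟨m, _, hm⟩ := Finset.exists_max_image Finset.univ (fun l => |x l|)
      ⟨_, Finset.mem_univ (Classical.arbitrary (Fin N))⟩
    have := key_bound B hdiag hdom α hα A hA x m (fun l => hm l (Finset.mem_univ l))
    rw [hx] at this
    simp only [Pi.zero_apply, abs_zero] at this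
    have hxm : |x m| = 0 := le_antisymm (by nlinarith) (abs_nonneg _)
    have hk' : |x k| ≤ 0 := hxm ▸ hm k (Finset.mem_univ k)
    simpa using le_antisymm hk' (abs_nonneg _)
  have hinj : Function.Injective (A *ᵥ ·) := by
    intro x y hxy
    have h0 : A *ᵥ (x - y) = 0 := by
      rw [mulVec_sub]; simp only at hxy; rw [hxy, sub_self]
    have := hker _ h0
    exact sub_eq_zero.mp this
  have hunit : IsUnit A := mulVec_injective_iff_isUnit.mp hinj
  refine ⟨hunit, fun v k => ?_⟩
  set x : Fin N → ℝ := A⁻¹ *ᵥ v with hx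
  have hAx : A *ᵥ x = v := by
    rw [hx, mulVec_mulVec, mul_nonsing_inv A (isUnit_iff_isUnit_det A |>.mp hunit), one_mulVec]
  obtain ⟨m, _, hm⟩ := Finset.exists_max_image Finset.univ (fun l => |x l|)
    ⟨_, Finset.mem_univ (Classical.arbitrary (Fin N))⟩
  have hkey := key_bound B hdiag hdom α hα A hA x m (fun l => hm l (Finset.mem_univ l))
  rw [hAx] at hkey
  have hsup : |v m| ≤ ⨆ l, |v l| := le_ciSup (f := fun l => |v l|) (Set.Finite.bddAbove (Set.finite_range _)) m
  calc |x k| ≤ |x m| := hm k (Finset.mem_univ k)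
    _ ≤ (1 / α) * |v m| := by rw [div_mul_eq_mul_div, le_div_iff₀ hα]; linarith [hkey]
    _ ≤ (1 / α) * ⨆ l, |v l| := by
        apply mul_le_mul_of_nonneg_left hsup (by positivity)
end

section
/- Let d = 3, a ∈ ℝ, b ≥ 0, c > 0, and f(Q)^{ij} = -aQ^{ij} + b((Q²)^{ij} - (1/3)tr(Q²)δ^{ij}) - c·tr(Q²)Q^{ij} for Q a real symmetric traceless 3×3 matrix. Suppose |Q|_F ≤ η and κ ≥ max{a + cη², 0}. Then √(Σ_{i,j=1}^3 (κQ^{ij} + f(Q)^{ij})²) ≤ κ|Q|_F + f̄(|Q|_F), where f̄(ξ) = -aξ + (b/√6)ξ² - cξ³. -/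
open Matrix

theorem stabilized_nonlinearity_bound_3d
    (a b c η κ : ℝ) (hb : 0 ≤ b) (hc : 0 < c)
    (Q : Matrix (Fin 3) (Fin 3) ℝ) (hsym : Q.IsSymm) (htr : Q.trace = 0)
    (hQ : frob3 Q ≤ η) (hκ : max (a + c * η ^ 2) 0 ≤ κ) :
    Real.sqrt (∑ i, ∑ j,
        (κ * Q i j +
          (-a * Q i j +
            b * ((Q * Q) i j - (1 / 3) * (Q * Q).trace * (if i = j then 1 else 0)) -
            c * (Q * Q).trace * Q i j)) ^ 2) ≤
      κ * frob3 Q +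
        (-a * frob3 Q + (b / Real.sqrt 6) * (frob3 Q) ^ 2 - c * (frob3 Q) ^ 3) := by
  have h6 : (0:ℝ) < Real.sqrt 6 := Real.sqrt_pos.mpr (by norm_num)
  have h6sq : (Real.sqrt 6) ^ 2 = 6 := Real.sq_sqrt (by norm_num)
  have h10 : Q 1 0 = Q 0 1 := hsym.apply 0 1
  have h20 : Q 2 0 = Q 0 2 := hsym.apply 0 2
  have h21 : Q 2 1 = Q 1 2 := hsym.apply 1 2
  have htr' : Q 0 0 + Q 1 1 + Q 2 2 = 0 := by
    simpa [Matrix.trace, Fin.sum_univ_three] using htr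
  have h22 : Q 2 2 = -Q 0 0 - Q 1 1 := by linarith
  set t : ℝ := (Q * Q).trace with ht
  -- t as a polynomial in entries, and equals sum of squares
  have hQQ : (∑ i, ∑ j, (Q i j)^2) = t := by
    simp only [ht, Matrix.trace, Matrix.mul_apply, Matrix.diag, Fin.sum_univ_three]
    rw [h10, h20, h21, h22]; ring
  have htnn : 0 ≤ t := by
    rw [← hQQ]
    exact Finset.sum_nonneg fun i _ => Finset.sum_nonneg fun j _ => sq_nonneg _
  set ρ : ℝ := frob3 Q with hρ
  have hρnn : 0 ≤ ρ := Real.sqrt_nonneg _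
  have hρt : ρ ^ 2 = t := by
    rw [hρ, frob3, hsym.eq, Real.sq_sqrt htnn]
  -- coefficient
  set l : ℝ := κ - a - c * t with hl
  have hln : 0 ≤ l := by
    have h1 : a + c * η ^ 2 ≤ κ := le_trans (le_max_left _ _) hκ
    have h2 : t ≤ η ^ 2 := by
      rw [← hρt]
      have hη : 0 ≤ η := le_trans hρnn hQ
      exact pow_le_pow_left₀ hρnn hQ 2
    nlinarith [hc.le]
  -- the "B" matrix entries
  set B : Fin 3 → Fin 3 → ℝ :=
    fun i j => (Q * Q) i j - (1/3) * t * (if i = j then 1 else 0) with hB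
  -- sum of squares of B
  have hN : (∑ i, ∑ j, (B i j)^2) = t^2 / 6 := by
    simp only [hB, ht, Matrix.trace, Matrix.mul_apply, Matrix.diag, Fin.sum_univ_three]
    rw [h10, h20, h21, h22]
    norm_num [Fin.ext_iff]
    ring
  -- inner product P
  set P : ℝ := ∑ i, ∑ j, Q i j * B i j with hP
  -- Cauchy-Schwarz
  have hCS : P ^ 2 ≤ t * (t^2/6) := by
    have := Finset.sum_mul_sq_le_sq_mul_sq (Finset.univ : Finset (Fin 3 × Fin 3))
      (fun p => Q p.1 p.2) (fun p => B p.1 p.2)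
    rw [Fintype.sum_prod_type, Fintype.sum_prod_type, Fintype.sum_prod_type] at this
    rw [hP]
    calc (∑ i, ∑ j, Q i j * B i j)^2 ≤ (∑ i, ∑ j, (Q i j)^2) * (∑ i, ∑ j, (B i j)^2) := this
    _ = t * (t^2/6) := by rw [hQQ, hN]
  have hPle : P ≤ ρ * (ρ^2 / Real.sqrt 6) := by
    have key : (ρ * (ρ^2 / Real.sqrt 6))^2 = t * (t^2/6) := by
      rw [mul_pow, div_pow, h6sq, show (ρ^2)^2 = ρ^2 * ρ^2 from by ring, hρt]
      ring
    have h0 : 0 ≤ ρ * (ρ^2 / Real.sqrt 6) := by positivity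
    nlinarith [hCS, sq_nonneg (P - ρ * (ρ^2 / Real.sqrt 6))]
  -- rewrite each entry
  have hentry : ∀ i j, κ * Q i j +
      (-a * Q i j + b * ((Q * Q) i j - (1 / 3) * (Q*Q).trace * (if i = j then 1 else 0)) -
        c * (Q*Q).trace * Q i j) = l * Q i j + b * B i j := by
    intro i j; rw [hB, hl, ← ht]; ring
  have hsum : (∑ i, ∑ j, (κ * Q i j +
      (-a * Q i j + b * ((Q * Q) i j - (1 / 3) * (Q*Q).trace * (if i = j then 1 else 0)) -
        c * (Q*Q).trace * Q i j)) ^ 2)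
      = l^2 * t + 2*l*b*P + b^2 * (t^2/6) := by
    calc (∑ i, ∑ j, (κ * Q i j +
        (-a * Q i j + b * ((Q * Q) i j - (1 / 3) * (Q*Q).trace * (if i = j then 1 else 0)) -
          c * (Q*Q).trace * Q i j)) ^ 2)
        = ∑ i, ∑ j, (l * Q i j + b * B i j)^2 := by
          refine Finset.sum_congr rfl fun i _ => Finset.sum_congr rfl fun j _ => ?_
          rw [hentry i j]
      _ = l^2 * (∑ i, ∑ j, (Q i j)^2) + 2*l*b*(∑ i, ∑ j, Q i j * B i j)
            + b^2 * (∑ i, ∑ j, (B i j)^2) := by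
          simp only [Fin.sum_univ_three]
          ring
      _ = l^2 * t + 2*l*b*P + b^2 * (t^2/6) := by rw [hQQ, hN, hP]
  have hR : κ * ρ + (-a * ρ + (b / Real.sqrt 6) * ρ ^ 2 - c * ρ ^ 3)
      = l * ρ + b * (ρ^2 / Real.sqrt 6) := by
    rw [hl, ← hρt]; field_simp; ring
  rw [hsum, hR]
  clear_value B P l t ρ
  clear hsum hentry hCS hN hQQ hB hP ht hl hR h10 h20 h21 htr' h22 htr hsym hκ hQ
  have hRnn : 0 ≤ l * ρ + b * (ρ^2 / Real.sqrt 6) := by positivity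
  rw [show l * ρ + b * (ρ^2 / Real.sqrt 6)
      = Real.sqrt ((l * ρ + b * (ρ^2 / Real.sqrt 6))^2) from
      (Real.sqrt_sq hRnn).symm]
  apply Real.sqrt_le_sqrt
  have expand : (l * ρ + b * (ρ^2 / Real.sqrt 6))^2
      = l^2 * ρ^2 + 2*l*b*(ρ * (ρ^2/Real.sqrt 6)) + b^2 * ((ρ^2)^2 / 6) := by
    rw [add_sq, mul_pow b, div_pow, h6sq]
    ring
  rw [expand, hρt]
  have h2lb : 0 ≤ 2*l*b := by positivity
  rw [hρt] at hPle
  nlinarith [mul_le_mul_of_nonneg_left hPle h2lb]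
end
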